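/- Let ℓ ∈ ℕ and let L = (L_0, …, L_{m−1}) be an ℓ-prefix-sorted list of pairwise-distinct lists over a linearly ordered type α. Let S = { i : (i > 0 and L_{i−1}.take ℓ = L_i.take ℓ) or (i < m−1 and L_i.take ℓ = L_{i+1}.take ℓ) }. Let L' = (L'_0, …, L'_{m−1}) be a list of the same length such that L'_i = L_i for all i ∉ S, and such that the subsequence of L' at the positions of S, taken in increasing order of position, is a strictly lexicographically sorted permutation of the subsequence of L at the positions of S. Then L' is strictly lexicographically sorted: L'_i <lex L'_j for all i < j. -/

import Mathlib

/-- Lexicographic (non-strict) order on lists. -/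
def lexLe {α : Type*} [LinearOrder α] (a b : List α) : Prop :=
  List.Lex (· < ·) a b ∨ a = b

/-- A finite sequence of lists is `ℓ`-prefix-sorted if its entries are sorted
lexicographically up to their length-`ℓ` prefixes. -/
def PrefixSorted {α : Type*} [LinearOrder α] (ℓ m : ℕ) (L : Fin m → List α) : Prop :=
  ∀ i j : Fin m, i ≤ j → lexLe ((L i).take ℓ) ((L j).take ℓ)

/-- `i` belongs to the set `S` of positions that share their length-`ℓ` prefix
with the previous or the next position. -/
def InS {α : Type*} [LinearOrder α] (ℓ m : ℕ) (L : Fin m → List α) (i : Fin m) : Prop :=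
  (∃ j : Fin m, j.1 + 1 = i.1 ∧ (L j).take ℓ = (L i).take ℓ) ∨
  (∃ j : Fin m, i.1 + 1 = j.1 ∧ (L i).take ℓ = (L j).take ℓ)

theorem lex_take_of_lex' {α : Type*} [LinearOrder α] :
    ∀ (n : ℕ) (a b : List α), List.Lex (· < ·) a b →
      List.Lex (· < ·) (a.take n) (b.take n) ∨ a.take n = b.take n := by
  intro n a b h
  induction h generalizing n with
  | nil =>
    cases n with
    | zero => right; rfl
    | succ n => left; exact List.Lex.nil
  | @cons x l₁ l₂ h ih =>
    cases n with
    | zero => right; rfl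
    | succ n =>
      rcases ih n with h' | h'
      · left; exact List.Lex.cons h'
      · right; simp [h']
  | @rel x l₁ y l₂ h =>
    cases n with
    | zero => right; rfl
    | succ n => left; exact List.Lex.rel h

theorem lex_of_lex_take' {α : Type*} [LinearOrder α] :
    ∀ (n : ℕ) (a b : List α), List.Lex (· < ·) (a.take n) (b.take n) →
      List.Lex (· < ·) a b := by
  intro n
  induction n with
  | zero => intro a b h; simp at h
  | succ n ih =>
    intro a b h
    match a, b with
    | [], [] => simp at h
    | [], y :: b => exact List.Lex.nil
    | x :: a, [] => simp at h
    | x :: a, y :: b =>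
      simp only [List.take_succ_cons] at h
      cases h with
      | cons h' => exact List.Lex.cons (ih a b h')
      | rel h' => exact List.Lex.rel h'

theorem lexLe_trans' {α : Type*} [LinearOrder α] {a b c : List α}
    (h1 : lexLe a b) (h2 : lexLe b c) : lexLe a c := by
  rcases h1 with h1 | rfl
  · rcases h2 with h2 | rfl
    · exact Or.inl (List.lex_trans (fun h h' => lt_trans h h') h1 h2)
    · exact Or.inl h1
  · exact h2

theorem lexLe_antisymm' {α : Type*} [LinearOrder α] {a b : List α}
    (h1 : lexLe a b) (h2 : lexLe b a) : a = b := by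
  rcases h1 with h1 | rfl
  · rcases h2 with h2 | rfl
    · exact absurd h2 (asymm h1)
    · rfl
  · rfl

theorem stmt_14 {α : Type*} [LinearOrder α] (ℓ m : ℕ) (L L' : Fin m → List α)
    (hsorted : PrefixSorted ℓ m L)
    (hdist : ∀ i j : Fin m, i ≠ j → L i ≠ L j)
    (hperm : ∃ σ : Equiv.Perm (Fin m),
      (∀ i : Fin m, ¬ InS ℓ m L i → σ i = i) ∧ ∀ i : Fin m, L' i = L (σ i))
    (hfix : ∀ i : Fin m, ¬ InS ℓ m L i → L' i = L i)
    (hsortS : ∀ i j : Fin m, InS ℓ m L i → InS ℓ m L j → i < j →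
      List.Lex (· < ·) (L' i) (L' j)) :
    ∀ i j : Fin m, i < j → List.Lex (· < ·) (L' i) (L' j) := by
  classical
  obtain ⟨σ, hσfix, hσL⟩ := hperm
  set f : Fin m → List α := fun i => (L i).take ℓ with hf
  -- σ preserves S
  have hσS : ∀ i : Fin m, InS ℓ m L i → InS ℓ m L (σ i) := by
    intro i hi
    by_contra h
    have h1 : σ (σ i) = σ i := hσfix _ h
    have h2 : σ i = i := σ.injective h1
    rw [h2] at h
    exact h hi
  -- sortedness of prefixes of L∘σ on S
  have hg : ∀ i j : Fin m, InS ℓ m L i → InS ℓ m L j → i ≤ j →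
      lexLe (f (σ i)) (f (σ j)) := by
    intro i j hi hj hij
    rcases eq_or_lt_of_le hij with rfl | hlt
    · exact Or.inr rfl
    · have := hsortS i j hi hj hlt
      rw [hσL i, hσL j] at this
      rcases lex_take_of_lex' ℓ _ _ this with h | h
      · exact Or.inl h
      · exact Or.inr h
  -- the finset S
  set S : Finset (Fin m) := Finset.univ.filter (fun i => InS ℓ m L i) with hS
  have memS : ∀ i : Fin m, i ∈ S ↔ InS ℓ m L i := by
    intro i; simp [hS]
  -- key : prefixes are preserved by σ
  have key : ∀ i : Fin m, f (σ i) = f i := by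
    intro i
    by_cases hi : InS ℓ m L i
    · -- pigeonhole, both directions
      have claim1 : ∃ t : Fin m, InS ℓ m L t ∧ t ≤ i ∧ i ≤ σ t := by
        by_contra hc
        push_neg at hc
        have hall : ∀ t : Fin m, InS ℓ m L t → t ≤ i → σ t < i := by
          intro t ht hti; exact hc t ht hti
        have hsub : (S.filter (· ≤ i)).image σ ⊆ S.filter (· < i) := by
          intro x hx
          simp only [Finset.mem_image, Finset.mem_filter] at hx ⊢
          obtain ⟨t, ⟨htS, hti⟩, rfl⟩ := hx
          rw [memS] at htS
          exact ⟨(memS _).2 (hσS t htS), hall t htS hti⟩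
        have hcard1 : (S.filter (· ≤ i)).card = ((S.filter (· ≤ i)).image σ).card :=
          (Finset.card_image_of_injective _ σ.injective).symm
        have hssub : S.filter (· < i) ⊂ S.filter (· ≤ i) := by
          constructor
          · intro x hx
            simp only [Finset.mem_filter] at hx ⊢
            exact ⟨hx.1, le_of_lt hx.2⟩
          · intro hcon
            have : i ∈ S.filter (· < i) := hcon (by
              simp only [Finset.mem_filter]
              exact ⟨(memS _).2 hi, le_refl i⟩)
            simp only [Finset.mem_filter] at this
            exact lt_irrefl i this.2
        have := (Finset.card_le_card hsub).trans_lt (Finset.card_lt_card hssub)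
        omega
      have claim2 : ∃ t : Fin m, InS ℓ m L t ∧ i ≤ t ∧ σ t ≤ i := by
        by_contra hc
        push_neg at hc
        have hall : ∀ t : Fin m, InS ℓ m L t → i ≤ t → i < σ t := by
          intro t ht hti; exact hc t ht hti
        have hsub : (S.filter (i ≤ ·)).image σ ⊆ S.filter (i < ·) := by
          intro x hx
          simp only [Finset.mem_image, Finset.mem_filter] at hx ⊢
          obtain ⟨t, ⟨htS, hti⟩, rfl⟩ := hx
          rw [memS] at htS
          exact ⟨(memS _).2 (hσS t htS), hall t htS hti⟩
        have hcard1 : (S.filter (i ≤ ·)).card = ((S.filter (i ≤ ·)).image σ).card :=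
          (Finset.card_image_of_injective _ σ.injective).symm
        have hssub : S.filter (i < ·) ⊂ S.filter (i ≤ ·) := by
          constructor
          · intro x hx
            simp only [Finset.mem_filter] at hx ⊢
            exact ⟨hx.1, le_of_lt hx.2⟩
          · intro hcon
            have : i ∈ S.filter (i < ·) := hcon (by
              simp only [Finset.mem_filter]
              exact ⟨(memS _).2 hi, le_refl i⟩)
            simp only [Finset.mem_filter] at this
            exact lt_irrefl i this.2
        have := (Finset.card_le_card hsub).trans_lt (Finset.card_lt_card hssub)
        omega
      obtain ⟨t₁, ht₁S, ht₁i, hit₁⟩ := claim1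
      obtain ⟨t₂, ht₂S, hit₂, ht₂i⟩ := claim2
      have h1 : lexLe (f i) (f (σ t₁)) := hsorted i (σ t₁) hit₁
      have h2 : lexLe (f (σ t₁)) (f (σ i)) := hg t₁ i ht₁S hi ht₁i
      have h3 : lexLe (f (σ i)) (f (σ t₂)) := hg i t₂ hi ht₂S hit₂
      have h4 : lexLe (f (σ t₂)) (f i) := hsorted (σ t₂) i ht₂i
      exact lexLe_antisymm' (lexLe_trans' h3 h4) (lexLe_trans' h1 h2)
    · rw [hσfix i hi]
  -- strict prefix inequality when one endpoint is outside S
  have hstrict : ∀ i j : Fin m, i < j → (¬ InS ℓ m L i ∨ ¬ InS ℓ m L j) →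
      List.Lex (· < ·) (f i) (f j) := by
    intro i j hij hout
    rcases hsorted i j (le_of_lt hij) with h | h
    · exact h
    · exfalso
      -- f i = f j ; show both i and j are in S
      have hfe : f i = f j := h
      have hij1 : i.1 + 1 ≤ j.1 := hij
      have hjm : i.1 + 1 < m := lt_of_le_of_lt hij1 j.2
      have hj1m : j.1 - 1 < m := by omega
      have hii' : i ≤ (⟨i.1 + 1, hjm⟩ : Fin m) := by rw [Fin.le_def]; exact Nat.le_succ _
      have hi'j : (⟨i.1 + 1, hjm⟩ : Fin m) ≤ j := by rw [Fin.le_def]; exact hij1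
      have e1 : lexLe (f i) (f ⟨i.1 + 1, hjm⟩) := hsorted i _ hii'
      have e2 : lexLe (f ⟨i.1 + 1, hjm⟩) (f j) := hsorted _ j hi'j
      have efi' : f i = f ⟨i.1 + 1, hjm⟩ :=
        lexLe_antisymm' e1 (lexLe_trans' e2 (Or.inr hfe.symm))
      have hiS : InS ℓ m L i := Or.inr ⟨⟨i.1 + 1, hjm⟩, rfl, efi'⟩
      have hij' : i ≤ (⟨j.1 - 1, hj1m⟩ : Fin m) := by rw [Fin.le_def]; simp only [Fin.val_mk]; omega
      have hj'j : (⟨j.1 - 1, hj1m⟩ : Fin m) ≤ j := by rw [Fin.le_def]; simp only [Fin.val_mk]; omega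
      have e3 : lexLe (f i) (f ⟨j.1 - 1, hj1m⟩) := hsorted i _ hij'
      have e4 : lexLe (f ⟨j.1 - 1, hj1m⟩) (f j) := hsorted _ j hj'j
      have efj' : f ⟨j.1 - 1, hj1m⟩ = f j :=
        lexLe_antisymm' e4 (lexLe_trans' (Or.inr hfe.symm) e3)
      have hjS : InS ℓ m L j := Or.inl ⟨⟨j.1 - 1, hj1m⟩, by simp; omega, efj'⟩
      rcases hout with h' | h'
      · exact h' hiS
      · exact h' hjS
  -- main argument
  intro i j hij
  by_cases hi : InS ℓ m L i <;> by_cases hj : InS ℓ m L j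
  · exact hsortS i j hi hj hij
  · -- i ∈ S, j ∉ S
    apply lex_of_lex_take' ℓ
    have h1 : (L' i).take ℓ = f i := by rw [hσL i]; exact key i
    have h2 : (L' j).take ℓ = f j := by rw [hfix j hj]
    rw [h1, h2]
    exact hstrict i j hij (Or.inr hj)
  · -- i ∉ S, j ∈ S
    apply lex_of_lex_take' ℓ
    have h1 : (L' i).take ℓ = f i := by rw [hfix i hi]
    have h2 : (L' j).take ℓ = f j := by rw [hσL j]; exact key j
    rw [h1, h2]
    exact hstrict i j hij (Or.inl hi)
  · -- neither
    apply lex_of_lex_take' ℓ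
    rw [hfix i hi, hfix j hj]
    exact hstrict i j hij (Or.inl hi)
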